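/- Let G be a network with request R and extended graph G_ext. Let x : S → {0,1} and f : E_ext → ℕ satisfy (IP-1) f(δ⁺_{E_ext}(v)) = f(δ⁻_{E_ext}(v)) for all v ∈ V_G, (IP-2) f(δ⁺_{E_R}(W)) ≥ x_s for all W ⊆ V_G and s ∈ W∩S, (IP-5) f(s,o⁻_S) ≤ u_S(s)·x_s for all s ∈ S, and (IP-8) f(o⁺,t) = 1 for all t ∈ T. Then the directed Steiner cuts hold: f(δ⁺_{E_R}(W)) ≥ 1 for every W ⊆ V_G with W∩T ≠ ∅. In other words, the directed Steiner cut inequalities (IP-3) are valid inequalities implied by the remaining constraints. -/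

import Mathlib

/-! Formalization of the Constrained Virtual Steiner Arborescence Problem (CVSAP),
its single-commodity flow IP formulation, and related notions. -/

/-- Vertices of the extended graph: original vertices plus super source `src`,
super sink `sinkS` for Steiner nodes and super sink `sinkR` for the root. -/
inductive ExtV (V : Type) where
  | orig : V → ExtV V
  | src : ExtV V
  | sinkS : ExtV V
  | sinkR : ExtV V
deriving DecidableEq

open ExtV

/-- A (finite) capacitated directed network. -/
structure Network (V : Type) [DecidableEq V] where
  E : Finset (V × V)
  uE : V × V → ℕ
  cE : V × V → ℝ

/-- A request `R = (root, S, T, u_r, c_S, u_S)`. -/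
structure Request (V : Type) [DecidableEq V] where
  root : V
  S : Finset V
  T : Finset V
  ur : ℕ
  cS : V → ℝ
  uS : V → ℕ

variable {V : Type} [DecidableEq V]

/-- Well-formedness: root is neither terminal nor Steiner site, Steiner sites and terminals
are disjoint, and all costs are positive. -/
def RequestWF (N : Network V) (R : Request V) : Prop :=
  R.root ∉ R.T ∧ R.root ∉ R.S ∧ Disjoint R.S R.T ∧
    (∀ s ∈ R.S, 0 < R.cS s) ∧ (∀ e ∈ N.E, 0 < N.cE e)

/-- Edge set of the extended graph `G_ext`. -/
def Eext (N : Network V) (R : Request V) : Finset (ExtV V × ExtV V) :=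
  (N.E.image fun e => (orig e.1, orig e.2)) ∪
    ({(orig R.root, sinkR)} : Finset (ExtV V × ExtV V)) ∪
    (R.S.image fun s => (orig s, sinkS)) ∪
    (R.S.image fun s => (src, orig s)) ∪
    (R.T.image fun t => (src, orig t))

/-- `E_R`: the extended edges without the edges into the Steiner super sink. -/
def ERext (N : Network V) (R : Request V) : Finset (ExtV V × ExtV V) :=
  (Eext N R).filter fun e => e.2 ≠ sinkS

/-- Edges of `F` leaving node `v`. -/
def outV (F : Finset (ExtV V × ExtV V)) (v : ExtV V) : Finset (ExtV V × ExtV V) :=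
  F.filter fun e => e.1 = v

/-- Edges of `F` entering node `v`. -/
def inV (F : Finset (ExtV V × ExtV V)) (v : ExtV V) : Finset (ExtV V × ExtV V) :=
  F.filter fun e => e.2 = v

/-- Edges of `F` leaving the node set `W`. -/
def outSet (F : Finset (ExtV V × ExtV V)) (W : Finset (ExtV V)) : Finset (ExtV V × ExtV V) :=
  F.filter fun e => e.1 ∈ W ∧ e.2 ∉ W

/-- Total flow of `f` on the edge set `F`. -/
def fSum (f : ExtV V × ExtV V → ℕ) (F : Finset (ExtV V × ExtV V)) : ℕ :=
  ∑ e ∈ F, f e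

/-- Embedding of a set of original nodes into the extended graph. -/
def extW (W : Finset V) : Finset (ExtV V) := W.image orig

/-- A walk in the support graph `G^f_ext`: consecutive nodes are joined by extended
edges carrying positive flow. -/
def IsSupportWalk (N : Network V) (R : Request V) (f : ExtV V × ExtV V → ℕ)
    (p : List (ExtV V)) : Prop :=
  p.Chain' fun a b => (a, b) ∈ Eext N R ∧ 1 ≤ f (a, b)

/-- (IP-1): flow conservation at all original nodes. -/
def IP1 (N : Network V) (R : Request V) (f : ExtV V × ExtV V → ℕ) : Prop :=
  ∀ v : V, fSum f (outV (Eext N R) (orig v)) = fSum f (inV (Eext N R) (orig v))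

/-- (IP-2): connectivity inequalities for activated Steiner sites. -/
def IP2 (N : Network V) (R : Request V) (x : V → ℕ) (f : ExtV V × ExtV V → ℕ) : Prop :=
  ∀ W : Finset V, ∀ s ∈ W, s ∈ R.S → x s ≤ fSum f (outSet (ERext N R) (extW W))

/-- (IP-3): directed Steiner cuts for terminals. -/
def IP3 (N : Network V) (R : Request V) (f : ExtV V × ExtV V → ℕ) : Prop :=
  ∀ W : Finset V, (W ∩ R.T).Nonempty → 1 ≤ fSum f (outSet (ERext N R) (extW W))

/-- Feasibility for the integer program IP-A-CVSAP. -/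
def IPFeasible (N : Network V) (R : Request V) (x : V → ℕ) (f : ExtV V × ExtV V → ℕ) : Prop :=
  (∀ s ∈ R.S, x s ≤ 1) ∧
  IP1 N R f ∧
  IP2 N R x f ∧
  IP3 N R f ∧
  (∀ s ∈ R.S, x s ≤ f (orig s, sinkS)) ∧
  (∀ s ∈ R.S, f (orig s, sinkS) ≤ R.uS s * x s) ∧
  f (orig R.root, sinkR) ≤ R.ur ∧
  (∀ e ∈ N.E, f (orig e.1, orig e.2) ≤ N.uE e) ∧
  (∀ t ∈ R.T, f (src, orig t) = 1) ∧
  (∀ s ∈ R.S, f (src, orig s) = x s)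

/-- Objective value of IP-A-CVSAP. -/
noncomputable def costIP (N : Network V) (R : Request V) (x : V → ℕ)
    (f : ExtV V × ExtV V → ℕ) : ℝ :=
  ∑ e ∈ N.E, N.cE e * f (orig e.1, orig e.2) + ∑ s ∈ R.S, R.cS s * x s

/-- A Virtual Arborescence: nodes, virtual edges and the mapping of virtual edges
onto paths in the underlying graph. -/
structure VirtArb (V : Type) where
  VT : Finset V
  ET : Finset (V × V)
  pi : V × V → List V

/-- `p` is a simple directed path in `N` from `u` to `v`. -/
def IsPathInG (N : Network V) (p : List V) (u v : V) : Prop :=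
  p.Chain' (fun a b => (a, b) ∈ N.E) ∧ p.head? = some u ∧ p.getLast? = some v ∧ p.Nodup

/-- The virtual edges whose path uses the edge `e` of the underlying graph. -/
def pathUses (TA : VirtArb V) (e : V × V) : Finset (V × V) :=
  TA.ET.filter fun d => e ∈ (TA.pi d).zip (TA.pi d).tail

/-- `|π(E_T)[e]|`: the number of paths of the virtual arborescence using edge `e`. -/
def pathCount (TA : VirtArb V) (e : V × V) : ℕ := (pathUses TA e).card

/-- Total degree of node `v` with respect to the virtual edge set `ET`. -/
def degTotal (ET : Finset (V × V)) (v : V) : ℕ :=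
  (ET.filter fun e => e.1 = v).card + (ET.filter fun e => e.2 = v).card

/-- `(VT, ET, r)` is an arborescence rooted at `r` with all edges oriented towards `r`. -/
def ArborTowards (VT : Finset V) (ET : Finset (V × V)) (r : V) : Prop :=
  (∀ e ∈ ET, e.1 ∈ VT ∧ e.2 ∈ VT ∧ e.1 ≠ e.2) ∧
  (∀ v ∈ VT, v ≠ r → (ET.filter fun e => e.1 = v).card = 1) ∧
  (∀ e ∈ ET, e.1 ≠ r) ∧
  (∀ v ∈ VT, ∃ p : List V, p.Chain' (fun a b => (a, b) ∈ ET) ∧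
      p.head? = some v ∧ p.getLast? = some r)

/-- `(VT, ET, r)` is an arborescence rooted at `r` with all edges oriented away from `r`. -/
def ArborAway (VT : Finset V) (ET : Finset (V × V)) (r : V) : Prop :=
  (∀ e ∈ ET, e.1 ∈ VT ∧ e.2 ∈ VT ∧ e.1 ≠ e.2) ∧
  (∀ v ∈ VT, v ≠ r → (ET.filter fun e => e.2 = v).card = 1) ∧
  (∀ e ∈ ET, e.2 ≠ r) ∧
  (∀ v ∈ VT, ∃ p : List V, p.Chain' (fun a b => (a, b) ∈ ET) ∧
      p.head? = some r ∧ p.getLast? = some v)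

/-- Feasible solutions of A-CVSAP: all arborescence edges oriented towards the root. -/
def FeasibleACVSAP (N : Network V) (R : Request V) (TA : VirtArb V) : Prop :=
  R.root ∈ TA.VT ∧
  ArborTowards TA.VT TA.ET R.root ∧
  (∀ d ∈ TA.ET, IsPathInG N (TA.pi d) d.1 d.2) ∧
  R.T ⊆ TA.VT ∧
  TA.VT ⊆ insert R.root (R.S ∪ R.T) ∧
  (∀ t ∈ R.T, degTotal TA.ET t = 1) ∧
  degTotal TA.ET R.root ≤ R.ur ∧
  (∀ s ∈ R.S, s ∈ TA.VT → degTotal TA.ET s ≤ R.uS s + 1) ∧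
  (∀ e ∈ N.E, pathCount TA e ≤ N.uE e)

/-- Feasible solutions of M-CVSAP: all arborescence edges oriented away from the root. -/
def FeasibleMCVSAP (N : Network V) (R : Request V) (TA : VirtArb V) : Prop :=
  R.root ∈ TA.VT ∧
  ArborAway TA.VT TA.ET R.root ∧
  (∀ d ∈ TA.ET, IsPathInG N (TA.pi d) d.1 d.2) ∧
  R.T ⊆ TA.VT ∧
  TA.VT ⊆ insert R.root (R.S ∪ R.T) ∧
  (∀ t ∈ R.T, degTotal TA.ET t = 1) ∧
  degTotal TA.ET R.root ≤ R.ur ∧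
  (∀ s ∈ R.S, s ∈ TA.VT → degTotal TA.ET s ≤ R.uS s + 1) ∧
  (∀ e ∈ N.E, pathCount TA e ≤ N.uE e)

/-- Cost of a virtual arborescence. -/
noncomputable def costCVSAP (N : Network V) (R : Request V) (TA : VirtArb V) : ℝ :=
  ∑ e ∈ N.E, N.cE e * pathCount TA e + ∑ s ∈ R.S.filter (· ∈ TA.VT), R.cS s

/-! ### Statement 3: the directed Steiner cuts (IP-3) are implied by (IP-1), (IP-2),
(IP-5) and (IP-8). -/


/-! ### Auxiliary lemmas for Statement 3 -/

lemma sum_outV_eq {V : Type} [DecidableEq V] (f : ExtV V × ExtV V → ℕ)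
    (F : Finset (ExtV V × ExtV V)) (W' : Finset (ExtV V)) :
    ∑ v ∈ W', fSum f (outV F v) = fSum f (F.filter fun e => e.1 ∈ W') := by
  unfold fSum outV
  exact Finset.sum_fiberwise_eq_sum_filter F W' (fun e => e.1) f

lemma sum_inV_eq {V : Type} [DecidableEq V] (f : ExtV V × ExtV V → ℕ)
    (F : Finset (ExtV V × ExtV V)) (W' : Finset (ExtV V)) :
    ∑ v ∈ W', fSum f (inV F v) = fSum f (F.filter fun e => e.2 ∈ W') := by
  unfold fSum inV
  exact Finset.sum_fiberwise_eq_sum_filter F W' (fun e => e.2) f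

theorem steiner_cuts_valid [Fintype V] (N : Network V) (R : Request V)
    (hWF : RequestWF N R) (x : V → ℕ) (f : ExtV V × ExtV V → ℕ)
    (hf0 : ∀ e ∉ Eext N R, f e = 0)
    (h1 : IP1 N R f) (h2 : IP2 N R x f)
    (h5 : ∀ s ∈ R.S, f (ExtV.orig s, ExtV.sinkS) ≤ R.uS s * x s)
    (h8 : ∀ t ∈ R.T, f (ExtV.src, ExtV.orig t) = 1) :
    IP3 N R f := by
  intro W hWT
  by_contra hcon
  have hzero : fSum f (outSet (ERext N R) (extW W)) = 0 := by omega
  have hx : ∀ s ∈ W, s ∈ R.S → x s = 0 := by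
    intro s hsW hsS
    have := h2 W s hsW hsS
    omega
  set W' := extW W with hW'
  have hsrc : (src : ExtV V) ∉ W' := by simp [hW', extW]
  have hsinkS : (sinkS : ExtV V) ∉ W' := by simp [hW', extW]
  -- conservation summed over W
  have hcons : ∑ v ∈ W, fSum f (outV (Eext N R) (orig v))
      = ∑ v ∈ W, fSum f (inV (Eext N R) (orig v)) :=
    Finset.sum_congr rfl fun v _ => h1 v
  have hinj : Function.Injective (orig : V → ExtV V) := fun a b h => by
    cases h; rfl
  have hout : ∑ v ∈ W, fSum f (outV (Eext N R) (orig v))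
      = fSum f ((Eext N R).filter fun e => e.1 ∈ W') := by
    rw [← sum_outV_eq f (Eext N R) W', hW', extW,
      Finset.sum_image fun a _ b _ h => hinj h]
  have hin : ∑ v ∈ W, fSum f (inV (Eext N R) (orig v))
      = fSum f ((Eext N R).filter fun e => e.2 ∈ W') := by
    rw [← sum_inV_eq f (Eext N R) W', hW', extW,
      Finset.sum_image fun a _ b _ h => hinj h]
  -- split the two cut sums at internal edges
  have hsplitOut : fSum f ((Eext N R).filter fun e => e.1 ∈ W')
      = fSum f ((Eext N R).filter fun e => e.1 ∈ W' ∧ e.2 ∈ W')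
        + fSum f (outSet (Eext N R) W') := by
    unfold fSum outSet
    rw [← Finset.sum_filter_add_sum_filter_not ((Eext N R).filter fun e => e.1 ∈ W')
      (fun e => e.2 ∈ W') f, Finset.filter_filter, Finset.filter_filter]
  have hsplitIn : fSum f ((Eext N R).filter fun e => e.2 ∈ W')
      = fSum f ((Eext N R).filter fun e => e.1 ∈ W' ∧ e.2 ∈ W')
        + fSum f ((Eext N R).filter fun e => e.1 ∉ W' ∧ e.2 ∈ W') := by
    unfold fSum
    rw [← Finset.sum_filter_add_sum_filter_not ((Eext N R).filter fun e => e.2 ∈ W')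
      (fun e => e.1 ∈ W') f, Finset.filter_filter, Finset.filter_filter]
    congr 1
    · apply Finset.sum_congr _ fun _ _ => rfl
      apply Finset.filter_congr
      intro e _
      simp [and_comm]
    · apply Finset.sum_congr _ fun _ _ => rfl
      apply Finset.filter_congr
      intro e _
      simp [and_comm]
  have hOutIn : fSum f (outSet (Eext N R) W')
      = fSum f ((Eext N R).filter fun e => e.1 ∉ W' ∧ e.2 ∈ W') := by
    have := hcons
    rw [hout, hin, hsplitOut, hsplitIn] at this
    omega
  -- the out-cut over Eext is zero
  have hOut0 : fSum f (outSet (Eext N R) W') = 0 := by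
    have hsplit : fSum f (outSet (Eext N R) W')
        = fSum f ((outSet (Eext N R) W').filter fun e => e.2 = sinkS)
          + fSum f ((outSet (Eext N R) W').filter fun e => e.2 ≠ sinkS) := by
      unfold fSum
      exact (Finset.sum_filter_add_sum_filter_not _ _ _).symm
    have h1' : fSum f ((outSet (Eext N R) W').filter fun e => e.2 = sinkS) = 0 := by
      apply Finset.sum_eq_zero
      intro e he
      simp only [Finset.mem_filter, outSet] at he
      obtain ⟨⟨heE, he1, he2⟩, hes⟩ := he
      -- e must be (orig s, sinkS) with s ∈ R.S
      simp only [Eext, Finset.mem_union, Finset.mem_image, Finset.mem_singleton] at heE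
      rcases heE with ((((⟨a, _, ha⟩ | hroot) | ⟨s, hsS, hs⟩) | ⟨s, _, hs⟩) | ⟨t, _, ht⟩)
      · exfalso; rw [← ha] at hes; simp at hes
      · exfalso; rw [hroot] at hes; simp at hes
      · -- e = (orig s, sinkS)
        have hsW : s ∈ W := by
          rw [← hs] at he1
          simp only [hW', extW, Finset.mem_image] at he1
          obtain ⟨w, hw, hweq⟩ := he1
          exact hinj hweq ▸ hw
        have := h5 s hsS
        rw [hx s hsW hsS, Nat.mul_zero] at this
        rw [← hs]
        omega
      · exfalso; rw [← hs] at he1; exact hsrc he1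
      · exfalso; rw [← ht] at he1; exact hsrc he1
    have h2' : ((outSet (Eext N R) W').filter fun e => e.2 ≠ sinkS)
        = outSet (ERext N R) W' := by
      ext e
      simp only [outSet, ERext, Finset.mem_filter]
      tauto
    rw [hsplit, h1', h2', hzero]
  -- the in-cut is at least 1
  obtain ⟨t, htW⟩ := hWT
  rw [Finset.mem_inter] at htW
  have hedge : (src, orig t) ∈ (Eext N R).filter fun e : ExtV V × ExtV V =>
      e.1 ∉ W' ∧ e.2 ∈ W' := by
    rw [Finset.mem_filter]
    refine ⟨?_, hsrc, ?_⟩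
    · simp only [Eext, Finset.mem_union, Finset.mem_image]
      exact Or.inr ⟨t, htW.2, rfl⟩
    · simp only [hW', extW, Finset.mem_image]
      exact ⟨t, htW.1, rfl⟩
  have hge : 1 ≤ fSum f ((Eext N R).filter fun e => e.1 ∉ W' ∧ e.2 ∈ W') := by
    unfold fSum
    calc 1 = f (src, orig t) := (h8 t htW.2).symm
    _ ≤ _ := Finset.single_le_sum (fun _ _ => Nat.zero_le _) hedge
  omega
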